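/- If (m₂, M₂) with m₂ > 0 is an equilibrium of the reduced system, then m₂ = (-M₂cef + M₂bd - cf)/(c(M₂e + d + 1)) and M₂ satisfies AM₂² + BM₂ + C = 0 where A = bce σ + be ε σ + bce + be ε, B = acef + bcdσ + bdεσ - abd + bcd + bcσ + bdε + bεσ + bc + bε, and C = acf. -/

import Mathlib

/-- If (m₂, M₂) with m₂ > 0 is an equilibrium of the reduced system, then
m₂ = (-M₂cef + M₂bd - cf)/(c(M₂e + d + 1)) and M₂ satisfies A M₂² + B M₂ + C = 0. -/
theorem interior_equilibrium_characterization (a b c d e f ε σ m₂ M₂ : ℝ)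
    (ha : 0 < a) (hb : 0 < b) (hc : 0 < c) (hd : 0 < d) (he : 0 < e) (hf : 0 < f)
    (hε : 0 < ε) (hσ : 0 < σ)
    (hm₂ : 0 < m₂) (hM₂ : 0 ≤ M₂)
    (heq1 : (a * d * m₂ / ((f + m₂) * (M₂ * e + 1) * (1 + σ)) *
      (1 + d * m₂ / ((f + m₂) * (M₂ * e + 1)))⁻¹ - ε - c) * m₂ = 0)
    (heq2 : c * m₂ - b * M₂ * d * m₂ / ((f + m₂) * (M₂ * e + 1)) *
      (1 + d * m₂ / ((f + m₂) * (M₂ * e + 1)))⁻¹ = 0) :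
    m₂ = (-(M₂ * c * e * f) + M₂ * b * d - c * f) / (c * (M₂ * e + d + 1)) ∧
    (b * c * e * σ + b * e * ε * σ + b * c * e + b * e * ε) * M₂ ^ 2 +
      (a * c * e * f + b * c * d * σ + b * d * ε * σ - a * b * d + b * c * d +
        b * c * σ + b * d * ε + b * ε * σ + b * c + b * ε) * M₂ +
      a * c * f = 0 := by
  have hPpos : 0 < (f + m₂) * (M₂ * e + 1) := by positivity
  have hP : (f + m₂) * (M₂ * e + 1) ≠ 0 := ne_of_gt hPpos
  have hσ1 : (0:ℝ) < 1 + σ := by linarith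
  have hσ1' : (1:ℝ) + σ ≠ 0 := ne_of_gt hσ1
  have hQpos : 0 < 1 + d * m₂ / ((f + m₂) * (M₂ * e + 1)) := by positivity
  have hQ : 1 + d * m₂ / ((f + m₂) * (M₂ * e + 1)) ≠ 0 := ne_of_gt hQpos
  have hm : m₂ ≠ 0 := ne_of_gt hm₂
  -- from heq1, the factor vanishes
  have h1 : a * d * m₂ / ((f + m₂) * (M₂ * e + 1) * (1 + σ)) *
      (1 + d * m₂ / ((f + m₂) * (M₂ * e + 1)))⁻¹ - ε - c = 0 := by
    rcases mul_eq_zero.mp heq1 with h | h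
    · exact h
    · exact absurd h hm
  have hE1 : a * d * m₂ = (ε + c) * ((f + m₂) * (M₂ * e + 1) + d * m₂) * (1 + σ) := by
    field_simp at h1
    refine mul_left_cancel₀ hP ?_
    linear_combination ((f + m₂) * (M₂ * e + 1)) * h1
  have hE2 : c * m₂ * ((f + m₂) * (M₂ * e + 1) + d * m₂) = b * M₂ * d * m₂ := by
    have h2 := heq2
    field_simp at h2
    linarith [h2]
  have hE2' : c * ((f + m₂) * (M₂ * e + 1) + d * m₂) = b * M₂ * d := by
    have := mul_left_cancel₀ hm (by linarith [hE2] : m₂ * (c * ((f + m₂) * (M₂ * e + 1) + d * m₂)) = m₂ * (b * M₂ * d))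
    exact this
  -- goal 1 form
  have hG1 : c * (M₂ * e + d + 1) * m₂ = -(M₂ * c * e * f) + M₂ * b * d - c * f := by
    linear_combination hE2'
  have hden : c * (M₂ * e + d + 1) ≠ 0 := by positivity
  have hacm : a * c * m₂ = (ε + c) * (1 + σ) * b * M₂ := by
    have hd' : d ≠ 0 := ne_of_gt hd
    have : d * (a * c * m₂) = d * ((ε + c) * (1 + σ) * b * M₂) := by
      linear_combination c * hE1 + (ε + c) * (1 + σ) * hE2'
    exact mul_left_cancel₀ hd' this
  constructor
  · rw [eq_div_iff hden]
    linear_combination hG1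
  · linear_combination a * hG1 - (M₂ * e + d + 1) * hacm
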